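/- arXiv:2406.13120 — 6 statements merged into one kernel-verified Lean document; each statement's English description precedes it below -/
import Mathlib

section
/- Let P be a nonzero Laurent polynomial with complex coefficients. Then the multiplication map V → V, w ↦ P·w, on the space V of doubly infinite formal series is surjective. -/
open LaurentPolynomial

/-- Multiplication of a doubly infinite formal series `w : ℤ → ℂ` by a Laurent
polynomial `P`, defined coefficientwise: `(P·w)_m = ∑_j P_j w_{m-j}`. -/
noncomputable def laurentMul (P : LaurentPolynomial ℂ) : (ℤ → ℂ) →ₗ[ℂ] (ℤ → ℂ) where
  toFun w m := ∑ j ∈ P.coeff.support, P.coeff j * w (m - j)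
  map_add' u v := by
    funext m
    simp [mul_add, Finset.sum_add_distrib]
  map_smul' c w := by
    funext m
    simp only [Pi.smul_apply, smul_eq_mul, RingHom.id_apply, Finset.mul_sum]
    exact Finset.sum_congr rfl fun j _ => by ring

/-- A recursively defined preimage candidate for `laurentMul P` applied to `v`,
where `e` and `d` are intended to be the minimal and maximal degrees of `P`. -/
noncomputable def solW (P : LaurentPolynomial ℂ) (v : ℤ → ℂ) (e d : ℤ) (n : ℤ) : ℂ :=
  if n < 0 then
    (v (n + d) - ∑ j ∈ P.coeff.support.erase d, P.coeff j *
      (if h : n < n + d - j ∧ n + d - j < 0 then solW P v e d (n + d - j) else 0)) / P.coeff d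
  else if n < d - e then 0
  else
    (v (n + e) - ∑ j ∈ P.coeff.support.erase e, P.coeff j *
      (if h : 0 ≤ n + e - j ∧ n + e - j < n then solW P v e d (n + e - j) else 0)) / P.coeff e
termination_by n.natAbs
decreasing_by
  · omega
  · omega

/-- for a nonzero Laurent polynomial `P`, the multiplication map
`w ↦ P·w` on the space of doubly infinite formal series is surjective. -/
theorem laurentMul_surjective (P : LaurentPolynomial ℂ) (hP : P ≠ 0) :
    Function.Surjective (laurentMul P) := by
  have hsupp : P.coeff.support.Nonempty := Finsupp.support_nonempty_iff.mpr (AddMonoidAlgebra.coeff_eq_zero.not.mpr hP)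
  set e := P.coeff.support.min' hsupp with he
  set d := P.coeff.support.max' hsupp with hd
  have hemem : e ∈ P.coeff.support := P.coeff.support.min'_mem hsupp
  have hdmem : d ∈ P.coeff.support := P.coeff.support.max'_mem hsupp
  have hed : e ≤ d := P.coeff.support.min'_le _ hdmem
  have hPe : P.coeff e ≠ 0 := Finsupp.mem_support_iff.mp hemem
  have hPd : P.coeff d ≠ 0 := Finsupp.mem_support_iff.mp hdmem
  intro v
  refine ⟨solW P v e d, ?_⟩
  funext m
  show ∑ j ∈ P.coeff.support, P.coeff j * solW P v e d (m - j) = v m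
  by_cases hm : d ≤ m
  · -- solve using the minimal-degree coefficient
    have key : solW P v e d (m - e) =
        (v m - ∑ j ∈ P.coeff.support.erase e, P.coeff j * solW P v e d (m - j)) / P.coeff e := by
      rw [solW, if_neg (by omega), if_neg (by omega),
        show m - e + e = m from by ring]
      congr 2
      refine Finset.sum_congr rfl fun j hj => ?_
      have hje : j ≠ e := Finset.ne_of_mem_erase hj
      have hjs : j ∈ P.coeff.support := Finset.mem_of_mem_erase hj
      have h1 : e ≤ j := P.coeff.support.min'_le _ hjs
      have h2 : j ≤ d := P.coeff.support.le_max' _ hjs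
      rw [dif_pos (⟨by omega, by omega⟩ : 0 ≤ m - j ∧ m - j < m - e)]
    rw [← Finset.add_sum_erase _ _ hemem, key, mul_comm,
      div_mul_cancel₀ _ hPe, sub_add_cancel]
  · -- solve using the maximal-degree coefficient
    have key : solW P v e d (m - d) =
        (v m - ∑ j ∈ P.coeff.support.erase d, P.coeff j * solW P v e d (m - j)) / P.coeff d := by
      rw [solW, if_pos (by omega : m - d < 0),
        show m - d + d = m from by ring]
      congr 2
      refine Finset.sum_congr rfl fun j hj => ?_
      have hje : j ≠ d := Finset.ne_of_mem_erase hj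
      have hjs : j ∈ P.coeff.support := Finset.mem_of_mem_erase hj
      have h1 : e ≤ j := P.coeff.support.min'_le _ hjs
      have h2 : j ≤ d := P.coeff.support.le_max' _ hjs
      by_cases hmj : m - j < 0
      · rw [dif_pos (⟨by omega, hmj⟩ : m - d < m - j ∧ m - j < 0)]
      · rw [dif_neg (by omega)]
        rw [solW, if_neg (by omega), if_pos (by omega : m - j < d - e)]
    rw [← Finset.add_sum_erase _ _ hdmem, key, mul_comm,
      div_mul_cancel₀ _ hPd, sub_add_cancel]
end

section
/- Let P be a nonzero Laurent polynomial with complex coefficients having exactly n nonzero roots counted with multiplicity. Then the kernel of the multiplication map V → V, w ↦ P·w, is a complex vector subspace of dimension n. -/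
open LaurentPolynomial

lemma laurentMul_apply (P : LaurentPolynomial ℂ) (w : ℤ → ℂ) (m : ℤ) :
    laurentMul P w m = ∑ j ∈ P.coeff.support, P.coeff j * w (m - j) := rfl

lemma laurentMul_apply_superset (P : LaurentPolynomial ℂ) (w : ℤ → ℂ) (m : ℤ)
    (s : Finset ℤ) (hs : P.coeff.support ⊆ s) :
    laurentMul P w m = ∑ j ∈ s, P.coeff j * w (m - j) := by
  rw [laurentMul_apply]
  refine Finset.sum_subset hs fun j _ hj => ?_
  rw [Finsupp.notMem_support_iff.mp hj, zero_mul]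

lemma laurentMul_T_mul (d : ℤ) (A : LaurentPolynomial ℂ) (w : ℤ → ℂ) (m : ℤ) :
    laurentMul (T d * A) w m = laurentMul A w (m - d) := by
  have hcoeff : ∀ j : ℤ, (T d * A : LaurentPolynomial ℂ).coeff j = A.coeff (j - d) := by
    intro j
    rw [show (T d : LaurentPolynomial ℂ) = AddMonoidAlgebra.single d 1 from rfl,
      AddMonoidAlgebra.coeff_single_mul_apply, one_mul]
    congr 1
    ring
  have hsupp : (T d * A).coeff.support ⊆ A.coeff.support.map (addLeftEmbedding d) := by
    intro j hj
    have hj' := Finsupp.mem_support_iff.mp hj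
    rw [hcoeff] at hj'
    exact Finset.mem_map.mpr ⟨j - d, Finsupp.mem_support_iff.mpr hj', by
      simp [addLeftEmbedding_apply]⟩
  rw [laurentMul_apply_superset _ _ _ _ hsupp, laurentMul_apply, Finset.sum_map]
  refine Finset.sum_congr rfl fun k _ => ?_
  rw [hcoeff]
  simp only [addLeftEmbedding_apply]
  congr 2 <;> ring

lemma toLaurent_coeff (Q : Polynomial ℂ) (j : ℕ) : (Q.toLaurent).coeff (j : ℤ) = Q.coeff j := by
  rw [LaurentPolynomial.coeff_toLaurent]
  exact Finsupp.mapDomain_apply Nat.castEmbedding.injective _ j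

lemma laurentMul_toLaurent_eq_zero_iff (Q : Polynomial ℂ) (w : ℤ → ℂ) :
    laurentMul Q.toLaurent w = 0 ↔
      ∀ m : ℤ, ∑ j ∈ Finset.range (Q.natDegree + 1), Q.coeff j * w (m - j) = 0 := by
  rw [funext_iff]
  refine forall_congr' fun m => ?_
  have hsupp : (Q.toLaurent).coeff.support ⊆ (Finset.range (Q.natDegree + 1)).map Nat.castEmbedding := by
    rw [LaurentPolynomial.support_coeff_toLaurent]
    exact Finset.map_subset_map.mpr Q.supp_subset_range_natDegree_succ
  rw [laurentMul_apply_superset _ _ _ _ hsupp, Finset.sum_map, Pi.zero_apply]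
  have hterm : ∀ j ∈ Finset.range (Q.natDegree + 1),
      (Polynomial.toLaurent Q).coeff ((Nat.castEmbedding : ℕ ↪ ℤ) j) * w (m - (Nat.castEmbedding : ℕ ↪ ℤ) j)
        = Q.coeff j * w (m - j) := fun j _ => by
    rw [show ((Nat.castEmbedding : ℕ ↪ ℤ) j) = (j : ℤ) from rfl, toLaurent_coeff]
  rw [Finset.sum_congr rfl hterm]

open Finset in
lemma rank_ker_toLaurent (Q : Polynomial ℂ) (hQ0 : Q.coeff 0 ≠ 0) :
    Module.rank ℂ (LinearMap.ker (laurentMul Q.toLaurent)) = Q.natDegree := by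
  classical
  set n := Q.natDegree with hn
  set q : ℕ → ℂ := Q.coeff with hq
  have hq0 : q 0 ≠ 0 := hQ0
  have hQne : Q ≠ 0 := fun h => hQ0 (by rw [hq, h]; simp)
  have hqn : q n ≠ 0 := by
    have := Polynomial.leadingCoeff_ne_zero.mpr hQne
    rwa [Polynomial.leadingCoeff] at this
  set E : LinearRecurrence ℂ := ⟨n, fun i => -q (n - (i : ℕ)) / q 0⟩ with hE
  set E' : LinearRecurrence ℂ := ⟨n, fun i => -q (i : ℕ) / q n⟩ with hE'
  have hEo : E.order = n := rfl
  have hEc : ∀ i : Fin n, E.coeffs i = -q (n - (i : ℕ)) / q 0 := fun _ => rfl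
  have hE'o : E'.order = n := rfl
  have hE'c : ∀ i : Fin n, E'.coeffs i = -q (i : ℕ) / q n := fun _ => rfl
  -- pointwise equivalence, forward direction recurrence
  have lemF : ∀ (w : ℤ → ℂ) (k : ℕ),
      (w (((k + n : ℕ) : ℤ)) = ∑ i : Fin n, (-q (n - (i : ℕ)) / q 0) * w (((k + (i : ℕ) : ℕ) : ℤ)))
        ↔ ∑ j ∈ range (n + 1), q j * w ((k : ℤ) + n - j) = 0 := by
    intro w k
    rw [Finset.sum_range_succ']
    push_cast [sub_zero]
    set S := ∑ j ∈ range n, q (j + 1) * w ((k : ℤ) + (n : ℤ) - ((j : ℤ) + 1)) with hS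
    have h2 : (∑ i : Fin n, -q (n - (i : ℕ)) / q 0 * w ((k : ℤ) + (i : ℕ)))
        = -(q 0)⁻¹ * S := by
      rw [Fin.sum_univ_eq_sum_range (fun i => -q (n - i) / q 0 * w ((k : ℤ) + (i : ℤ))),
        ← Finset.sum_range_reflect, hS, Finset.mul_sum]
      refine Finset.sum_congr rfl fun j hj => ?_
      rw [Finset.mem_range] at hj
      have e1 : n - (n - 1 - j) = j + 1 := by omega
      have e2 : ((n - 1 - j : ℕ) : ℤ) = (n : ℤ) - 1 - j := by omega
      have e3 : (k : ℤ) + ((n : ℤ) - 1 - j) = (k : ℤ) + n - (j + 1) := by ring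
      rw [e1, e2, e3]
      field_simp
    rw [h2]
    constructor
    · intro h
      rw [h]
      field_simp
      ring
    · intro h
      field_simp
      linear_combination h
  -- pointwise equivalence, backward direction recurrence
  have lemB : ∀ (w : ℤ → ℂ) (k : ℕ),
      (w ((n : ℤ) - 1 - ((k + n : ℕ) : ℤ))
          = ∑ i : Fin n, (-q (i : ℕ) / q n) * w ((n : ℤ) - 1 - ((k + (i : ℕ) : ℕ) : ℤ)))
        ↔ ∑ j ∈ range (n + 1), q j * w ((n : ℤ) - 1 - k - j) = 0 := by
    intro w k
    rw [Finset.sum_range_succ]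
    push_cast
    rw [show (n : ℤ) - 1 - ((k : ℤ) + (n : ℤ)) = -1 - (k : ℤ) from by ring,
      show (n : ℤ) - 1 - (k : ℤ) - (n : ℤ) = -1 - (k : ℤ) from by ring]
    set S := ∑ j ∈ range n, q j * w ((n : ℤ) - 1 - (k : ℤ) - (j : ℤ)) with hS
    have h2 : (∑ i : Fin n, -q (i : ℕ) / q n * w ((n : ℤ) - 1 - ((k : ℤ) + (i : ℕ))))
        = -(q n)⁻¹ * S := by
      rw [Fin.sum_univ_eq_sum_range (fun i => -q i / q n * w ((n : ℤ) - 1 - ((k : ℤ) + (i : ℤ)))),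
        hS, Finset.mul_sum]
      refine Finset.sum_congr rfl fun j hj => ?_
      have e3 : (n : ℤ) - 1 - ((k : ℤ) + j) = (n : ℤ) - 1 - k - j := by ring
      rw [e3]
      field_simp
    rw [h2]
    constructor
    · intro h
      rw [h]
      field_simp
      ring
    · intro h
      field_simp
      linear_combination h
  -- kernel membership description
  have hker : ∀ w : ℤ → ℂ, w ∈ LinearMap.ker (laurentMul Q.toLaurent) ↔
      ∀ m : ℤ, ∑ j ∈ range (n + 1), q j * w (m - j) = 0 := fun w => by
    rw [LinearMap.mem_ker, laurentMul_toLaurent_eq_zero_iff]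
  -- the restriction map to the solution space
  let res : (ℤ → ℂ) →ₗ[ℂ] (ℕ → ℂ) := LinearMap.funLeft ℂ ℂ (fun k : ℕ => (k : ℤ))
  have hres : ∀ w : LinearMap.ker (laurentMul Q.toLaurent),
      res ((LinearMap.ker (laurentMul Q.toLaurent)).subtype w) ∈ E.solSpace := by
    rintro ⟨w, hw⟩
    rw [← LinearRecurrence.is_sol_iff_mem_solSpace]
    intro k
    show w (((k + n : ℕ)) : ℤ) = ∑ i : Fin n, (-q (n - (i : ℕ)) / q 0) * w (((k + (i : ℕ) : ℕ) : ℤ))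
    exact (lemF w k).mpr ((hker w).mp hw ((k : ℤ) + n))
  let φ : LinearMap.ker (laurentMul Q.toLaurent) →ₗ[ℂ] E.solSpace :=
    LinearMap.codRestrict E.solSpace
      (res ∘ₗ (LinearMap.ker (laurentMul Q.toLaurent)).subtype) hres
  have hinj : Function.Injective φ := by
    rw [injective_iff_map_eq_zero]
    rintro ⟨w, hw⟩ hx
    have hzero : ∀ k : ℕ, w (k : ℤ) = 0 := fun k => congrFun (congrArg Subtype.val hx) k
    have hsol : E'.IsSolution (fun ℓ : ℕ => w ((n : ℤ) - 1 - ℓ)) := by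
      intro k
      show w ((n : ℤ) - 1 - ((k + n : ℕ) : ℤ))
          = ∑ i : Fin n, (-q (i : ℕ) / q n) * w ((n : ℤ) - 1 - ((k + (i : ℕ) : ℕ) : ℤ))
      exact (lemB w k).mpr ((hker w).mp hw ((n : ℤ) - 1 - k))
    have hu0 : (fun ℓ : ℕ => w ((n : ℤ) - 1 - ℓ)) = 0 := by
      have h1 : E'.toInit ⟨fun ℓ : ℕ => w ((n : ℤ) - 1 - ℓ), (E'.is_sol_iff_mem_solSpace _).mp hsol⟩ = 0 := by
        funext i
        show w ((n : ℤ) - 1 - ((i : ℕ) : ℤ)) = 0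
        have hi : (i : ℕ) < n := i.2
        have he : (n : ℤ) - 1 - ((i : ℕ) : ℤ) = ((n - 1 - (i : ℕ) : ℕ) : ℤ) := by omega
        rw [he]
        exact hzero _
      have h2 : (⟨fun ℓ : ℕ => w ((n : ℤ) - 1 - ℓ), (E'.is_sol_iff_mem_solSpace _).mp hsol⟩ : E'.solSpace) = 0 := E'.toInit.injective (by rw [h1, map_zero])
      exact congrArg Subtype.val h2
    apply Subtype.ext
    funext m
    by_cases hm : 0 ≤ m
    · have he : m = ((m.toNat : ℕ) : ℤ) := by omega
      rw [he]
      exact hzero _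
    · have he : m = (n : ℤ) - 1 - (((n : ℤ) - 1 - m).toNat : ℕ) := by omega
      rw [he]
      exact congrFun hu0 _
  have hsurj : Function.Surjective φ := by
    rintro ⟨a, ha⟩
    have ha' : E.IsSolution a := ha
    set u : E'.solSpace := E'.toInit.symm (fun i : Fin n => a (n - 1 - (i : ℕ))) with hu
    have husol : E'.IsSolution (u : ℕ → ℂ) := u.2
    have hui : ∀ i : Fin n, (u : ℕ → ℂ) (i : ℕ) = a (n - 1 - (i : ℕ)) := by
      intro i
      exact congrFun (E'.toInit.apply_symm_apply (fun i : Fin n => a (n - 1 - (i : ℕ)))) i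
    set w : ℤ → ℂ :=
      fun m => if 0 ≤ m then a m.toNat else (u : ℕ → ℂ) ((n : ℤ) - 1 - m).toNat with hwdef
    have hwa : ∀ k : ℕ, w (k : ℤ) = a k := by
      intro k
      rw [hwdef]
      simp
    have hwb : ∀ ℓ : ℕ, w ((n : ℤ) - 1 - ℓ) = (u : ℕ → ℂ) ℓ := by
      intro ℓ
      by_cases hℓ : ℓ < n
      · have h0 : (0 : ℤ) ≤ (n : ℤ) - 1 - ℓ := by omega
        rw [hwdef]
        simp only
        rw [if_pos h0]
        have he : ((n : ℤ) - 1 - ℓ).toNat = n - 1 - ℓ := by omega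
        rw [he]
        exact (hui ⟨ℓ, hℓ⟩).symm
      · have h0 : ¬ (0 : ℤ) ≤ (n : ℤ) - 1 - ℓ := by omega
        rw [hwdef]
        simp only
        rw [if_neg h0]
        have he : ((n : ℤ) - 1 - ((n : ℤ) - 1 - (ℓ : ℤ))).toNat = ℓ := by omega
        rw [he]
    have hwker : w ∈ LinearMap.ker (laurentMul Q.toLaurent) := by
      rw [hker]
      intro m
      by_cases hm : (n : ℤ) ≤ m
      · obtain ⟨k, hk⟩ : ∃ k : ℕ, m = (k : ℤ) + n := ⟨(m - n).toNat, by omega⟩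
        rw [hk]
        refine (lemF w k).mp ?_
        rw [hwa (k + n)]
        refine (ha' k).trans ?_
        refine (Finset.sum_congr rfl fun i _ => ?_)
        rw [hwa (k + (i : ℕ))]
      · obtain ⟨k, hk⟩ : ∃ k : ℕ, m = (n : ℤ) - 1 - k := ⟨((n : ℤ) - 1 - m).toNat, by omega⟩
        rw [hk]
        refine (lemB w k).mp ?_
        rw [hwb (k + n)]
        refine (husol k).trans ?_
        refine (Finset.sum_congr rfl fun i _ => ?_)
        rw [hwb (k + (i : ℕ))]
    refine ⟨⟨w, hwker⟩, ?_⟩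
    apply Subtype.ext
    funext k
    exact hwa k
  have e := LinearEquiv.ofBijective φ ⟨hinj, hsurj⟩
  rw [e.rank_eq, E.solSpace_rank, hEo]


/-- if the nonzero Laurent polynomial `P` has exactly `n` nonzero
roots counted with multiplicity (i.e. `P = z^d · Q` with `Q(0) ≠ 0` and
`deg Q = n`), then the kernel of multiplication by `P` on the space of doubly
infinite formal series has dimension `n`. -/
theorem rank_ker_laurentMul (P : LaurentPolynomial ℂ) (hP : P ≠ 0) (n : ℕ)
    (d : ℤ) (Q : Polynomial ℂ) (hPQ : P = T d * Q.toLaurent)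
    (hQ0 : Q.coeff 0 ≠ 0) (hdeg : Q.natDegree = n) :
    Module.rank ℂ (LinearMap.ker (laurentMul P)) = n := by
  have hker_eq : LinearMap.ker (laurentMul P) = LinearMap.ker (laurentMul Q.toLaurent) := by
    ext w
    simp only [LinearMap.mem_ker]
    constructor
    · intro h
      funext m
      have h' := congrFun h (m + d)
      rw [hPQ] at h'
      rw [laurentMul_T_mul, add_sub_cancel_right] at h'
      exact h'
    · intro h
      rw [hPQ]
      funext m
      rw [laurentMul_T_mul]
      exact congrFun h (m - d)
  rw [hker_eq, rank_ker_toLaurent Q hQ0, hdeg]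
end

section
/- Let a be a nonzero complex number. Then the kernel of the multiplication map V → V, w ↦ (z−a)·w, is one-dimensional and is spanned by the series ∑_{i∈ℤ} a^{−i} z^i. -/
open LaurentPolynomial

lemma coeffP (a : ℂ) (j : ℤ) : (T 1 - C a : LaurentPolynomial ℂ).coeff j =
    (if j = 1 then 1 else 0) - (if j = 0 then a else 0) := by
  rw [AddMonoidAlgebra.coeff_sub, Finsupp.sub_apply, T, ← single_eq_C, AddMonoidAlgebra.coeff_single,
    AddMonoidAlgebra.coeff_single, Finsupp.single_apply, Finsupp.single_apply]
  simp [eq_comm]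

lemma laurentMul_key (a : ℂ) (w : ℤ → ℂ) (m : ℤ) :
    laurentMul (T 1 - C a) w m = w (m - 1) - a * w m := by
  have hsub : (T 1 - C a : LaurentPolynomial ℂ).coeff.support ⊆ ({0, 1} : Finset ℤ) := by
    intro j hj
    simp only [Finsupp.mem_support_iff, coeffP] at hj
    by_contra h
    simp only [Finset.mem_insert, Finset.mem_singleton, not_or] at h
    simp [h.1, h.2] at hj
  show ∑ j ∈ (T 1 - C a : LaurentPolynomial ℂ).coeff.support,
      (T 1 - C a : LaurentPolynomial ℂ).coeff j * w (m - j) = _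
  rw [Finset.sum_subset hsub (by intro j _ hj; rw [Finsupp.notMem_support_iff.mp hj, zero_mul])]
  simp [coeffP]
  ring

lemma mem_ker_iff (a : ℂ) (w : ℤ → ℂ) :
    w ∈ LinearMap.ker (laurentMul (T 1 - C a)) ↔ ∀ m : ℤ, w (m - 1) = a * w m := by
  rw [LinearMap.mem_ker, funext_iff]
  constructor
  · intro h m
    have := h m
    rw [laurentMul_key] at this
    simpa [sub_eq_zero] using this
  · intro h m
    rw [laurentMul_key, h m, Pi.zero_apply, sub_self]

/-- for a nonzero complex number `a`, the kernel of multiplication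
by `z - a` on the space of doubly infinite formal series is one-dimensional,
spanned by the series `∑_{i ∈ ℤ} a^{-i} z^i`. -/
theorem ker_laurentMul_linear (a : ℂ) (ha : a ≠ 0) :
    LinearMap.ker (laurentMul (T 1 - C a)) =
        Submodule.span ℂ {fun i : ℤ => a ^ (-i)} ∧
    Module.rank ℂ (LinearMap.ker (laurentMul (T 1 - C a))) = 1 := by
  have hv : (fun i : ℤ => a ^ (-i)) ∈ LinearMap.ker (laurentMul (T 1 - C a)) := by
    rw [mem_ker_iff]
    intro m
    rw [← zpow_one_add₀ ha]
    ring_nf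
  have hker : LinearMap.ker (laurentMul (T 1 - C a)) =
      Submodule.span ℂ {fun i : ℤ => a ^ (-i)} := by
    apply le_antisymm
    · intro w hw
      rw [mem_ker_iff] at hw
      have hval : ∀ m : ℤ, w m = w 0 * a ^ (-m) := by
        intro m
        induction m using Int.induction_on with
        | zero => simp
        | succ n ih =>
          have h := hw (n + 1)
          rw [add_sub_cancel_right, ih] at h
          have h2 : w (↑n + 1 : ℤ) = w 0 * a ^ (-↑n : ℤ) / a := by
            rw [eq_div_iff ha, mul_comm]; exact h.symm
          rw [h2, show (-(↑n + 1) : ℤ) = -↑n + (-1) by ring, zpow_add₀ ha, zpow_neg_one]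
          ring
        | pred n ih =>
          have h := hw (-n)
          rw [ih] at h
          rw [h, show (-(-↑n - 1) : ℤ) = (- -↑n) + 1 by ring, zpow_add₀ ha, zpow_one]
          ring
      have : w = w 0 • (fun i : ℤ => a ^ (-i)) := by
        funext m; simpa using hval m
      rw [this]
      exact Submodule.smul_mem _ _ (Submodule.mem_span_singleton_self _)
    · rw [Submodule.span_le, Set.singleton_subset_iff]
      exact hv
  refine ⟨hker, ?_⟩
  rw [hker]
  have hne : (fun i : ℤ => a ^ (-i)) ≠ 0 := by
    intro h
    have := congrFun h 0
    simp at this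
  rw [rank_span_set (LinearIndepOn.singleton (R := ℂ) (v := id) hne)]
  simp
end

section
/- Let T be a ℂ-linear map from the algebra of Laurent polynomials ℂ[z,z⁻¹] to ℂ such that T(1) = 1 and T(R·ρ(R)) > 0 (in particular real) for every nonzero Laurent polynomial R. Then for every nonzero integer k one has |T(z^k)| < 1. -/
open LaurentPolynomial
open scoped ComplexOrder

/-- The antilinear conjugation `ρ` on `ℂ[z,z⁻¹]`, sending `∑ aᵢ zⁱ` to
`∑ conj(aᵢ) z⁻ⁱ`. -/
noncomputable def rho (P : LaurentPolynomial ℂ) : LaurentPolynomial ℂ :=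
  AddMonoidAlgebra.ofCoeff (Finsupp.equivMapDomain (Equiv.neg ℤ)
    (Finsupp.mapRange (starRingEnd ℂ) (map_zero _) P.coeff))

lemma rho_single (n : ℤ) (a : ℂ) :
    rho (AddMonoidAlgebra.single n a) = AddMonoidAlgebra.single (-n) (starRingEnd ℂ a) := by
  unfold rho
  rw [AddMonoidAlgebra.coeff_single, Finsupp.mapRange_single, Finsupp.equivMapDomain_single]
  rfl

lemma rho_add (P Q : LaurentPolynomial ℂ) : rho (P + Q) = rho P + rho Q := by
  unfold rho
  ext n
  simp only [Finsupp.equivMapDomain_apply, Finsupp.mapRange_apply]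
  rw [AddMonoidAlgebra.coeff_add, Finsupp.add_apply]
  simp [Finsupp.equivMapDomain_apply, Finsupp.mapRange_apply]

lemma rho_R (c : ℂ) (k : ℤ) :
    rho (1 + LaurentPolynomial.C c * T k) = 1 + LaurentPolynomial.C (starRingEnd ℂ c) * T (-k) := by
  have h1 : (1 : LaurentPolynomial ℂ) = AddMonoidAlgebra.single 0 1 := rfl
  rw [← single_eq_C_mul_T, ← single_eq_C_mul_T, h1, rho_add, rho_single, rho_single]
  norm_num

lemma R_ne_zero (c : ℂ) (k : ℤ) (hk : k ≠ 0) :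
    (1 + LaurentPolynomial.C c * T k : LaurentPolynomial ℂ) ≠ 0 := by
  intro h
  have h1 : (1 : LaurentPolynomial ℂ) = AddMonoidAlgebra.single 0 1 := rfl
  rw [← single_eq_C_mul_T, h1] at h
  have h' : (Finsupp.single 0 1 + Finsupp.single k c : ℤ →₀ ℂ) = 0 := congrArg AddMonoidAlgebra.coeff h
  have := DFunLike.congr_fun h' (0 : ℤ)
  rw [Finsupp.add_apply, Finsupp.single_eq_same, Finsupp.single_eq_of_ne hk.symm] at this
  norm_num at this

/-- if `tr : ℂ[z,z⁻¹] → ℂ` is linear with `tr 1 = 1` and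
`tr(R·ρ(R)) > 0` (positive real, in the order of `ℂ`) for every nonzero
Laurent polynomial `R`, then `|tr(z^k)| < 1` for every nonzero integer `k`. -/
theorem abs_trace_T_lt_one (tr : LaurentPolynomial ℂ →ₗ[ℂ] ℂ)
    (h1 : tr 1 = 1)
    (hpos : ∀ R : LaurentPolynomial ℂ, R ≠ 0 → 0 < tr (R * rho R))
    (k : ℤ) (hk : k ≠ 0) :
    ‖tr (T k)‖ < 1 := by
  set t := tr (T k) with ht
  set s := tr (T (-k)) with hs
  have key : ∀ c : ℂ, 0 < 1 + starRingEnd ℂ c * s + c * t + c * starRingEnd ℂ c := by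
    intro c
    have h0 := hpos _ (R_ne_zero c k hk)
    rw [rho_R] at h0
    have hT : (T k : LaurentPolynomial ℂ) * T (-k) = 1 := by
      rw [← T_add, add_neg_cancel, T_zero]
    have hAB : LaurentPolynomial.C c * T k * (LaurentPolynomial.C (starRingEnd ℂ c) * T (-k))
        = LaurentPolynomial.C (c * starRingEnd ℂ c) := by
      calc LaurentPolynomial.C c * T k * (LaurentPolynomial.C (starRingEnd ℂ c) * T (-k))
          = LaurentPolynomial.C c * LaurentPolynomial.C (starRingEnd ℂ c) * (T k * T (-k)) := by
            ring
        _ = LaurentPolynomial.C (c * starRingEnd ℂ c) := by rw [hT, map_mul, mul_one]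
    have hexp : (1 + LaurentPolynomial.C c * T k) * (1 + LaurentPolynomial.C (starRingEnd ℂ c) * T (-k))
        = 1 + LaurentPolynomial.C (starRingEnd ℂ c) * T (-k) + LaurentPolynomial.C c * T k
          + LaurentPolynomial.C (c * starRingEnd ℂ c) := by
      rw [← hAB]; ring
    rw [hexp] at h0
    have hC : ∀ (a : ℂ) (P : LaurentPolynomial ℂ),
        tr (LaurentPolynomial.C a * P) = a * tr P := by
      intro a P
      rw [C_eq_algebraMap, ← Algebra.smul_def, map_smul, smul_eq_mul]
    have hC' : ∀ a : ℂ, tr (LaurentPolynomial.C a) = a := by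
      intro a
      have := hC a 1
      rwa [mul_one, h1, mul_one] at this
    rw [map_add, map_add, map_add, h1, hC, hC, hC'] at h0
    exact h0
  have him : ∀ c : ℂ, (starRingEnd ℂ c * s + c * t).im = 0 := by
    intro c
    have h0 := (Complex.lt_def.mp (key c)).2
    simp only [Complex.zero_im] at h0
    have h2 : (1 + starRingEnd ℂ c * s + c * t + c * starRingEnd ℂ c).im
        = (starRingEnd ℂ c * s + c * t).im := by
      simp [Complex.mul_conj]
    rw [h2] at h0
    linarith
  have him1 := him 1
  have himI := him Complex.I
  simp [Complex.add_im, Complex.mul_im, Complex.conj_re, Complex.conj_im] at him1 himI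
  have hsconj : s = starRingEnd ℂ t := by
    apply Complex.ext
    · simp only [Complex.conj_re]; linarith
    · simp only [Complex.conj_im]; linarith
  by_cases ht0 : t = 0
  · simp [ht0]
  · set r := ‖t‖ with hr
    have hr0 : (0:ℝ) < r := by rw [hr]; exact norm_pos_iff.mpr ht0
    have hrne : (r : ℂ) ≠ 0 := by exact_mod_cast hr0.ne'
    set c : ℂ := -(starRingEnd ℂ t) / r with hc
    have hct : c * t = -(r : ℂ) := by
      rw [hc, div_mul_eq_mul_div, neg_mul, mul_comm, Complex.mul_conj, Complex.normSq_eq_norm_sq,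
        ← hr]
      push_cast
      field_simp
    have habs : ‖c‖ = 1 := by
      rw [hc, norm_div, norm_neg, Complex.norm_conj, Complex.norm_real, Real.norm_eq_abs, abs_of_pos hr0,
        ← hr, div_self hr0.ne']
    have hcc : c * starRingEnd ℂ c = 1 := by
      rw [Complex.mul_conj, Complex.normSq_eq_norm_sq, habs]
      norm_num
    have hcs : starRingEnd ℂ c * s = -(r : ℂ) := by
      rw [hsconj, ← map_mul, hct]
      simp
    have hfin := key c
    rw [hct, hcs, hcc] at hfin
    have hre := (Complex.lt_def.mp hfin).1
    simp [Complex.add_re] at hre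
    linarith
end

section
/- Let 0 < q < 1, let l be an integer, let P be a nonzero Laurent polynomial with complex coefficients, and let T : ℂ[z,z⁻¹] → ℂ be ℂ-linear and satisfy T(P(qz)R(qz)) = T(z^l P(q^{−1}z)R(q^{−1}z)) for every Laurent polynomial R. Define w ∈ V by w_m = T(z^{−m}) for m ∈ ℤ. Then the formal series identity P(z)·w(q^{−1}z) = q^l · (z^l P(z))·w(qz) holds in V, where w(sz) denotes the series with m-th coefficient s^m w_m. -/
open LaurentPolynomial

/-- The Laurent polynomial `P(sz)` obtained from `P` by substituting `z ↦ sz`. -/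
noncomputable def lscale (s : ℂ) (P : LaurentPolynomial ℂ) : LaurentPolynomial ℂ :=
  ∑ j ∈ P.coeff.support, C (P.coeff j * s ^ j) * T j

/-- The series `w(sz)`, whose `m`-th coefficient is `s^m wₘ`. -/
noncomputable def vscale (s : ℂ) (w : ℤ → ℂ) : ℤ → ℂ :=
  fun m => s ^ m * w m

lemma mulT_apply (Q : LaurentPolynomial ℂ) (k j : ℤ) :
    (Q * T k : LaurentPolynomial ℂ).coeff j = Q.coeff (j - k) := by
  have h : (T k : LaurentPolynomial ℂ) = AddMonoidAlgebra.single k 1 := rfl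
  rw [h, AddMonoidAlgebra.coeff_mul_single_apply, mul_one, sub_eq_add_neg]

lemma shift_sum (Q : LaurentPolynomial ℂ) (k : ℤ) (g : ℤ → ℂ) :
    ∑ j ∈ (Q * T k : LaurentPolynomial ℂ).coeff.support,
        (Q * T k : LaurentPolynomial ℂ).coeff j * g j
      = ∑ j ∈ Q.coeff.support, Q.coeff j * g (j + k) := by
  refine Finset.sum_nbij' (i := fun j => j - k) (j := fun j => j + k) ?_ ?_ ?_ ?_ ?_
  · intro a ha
    simp only [Finsupp.mem_support_iff, mulT_apply] at ha ⊢
    exact ha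
  · intro a ha
    simp only [Finsupp.mem_support_iff, mulT_apply, add_sub_cancel_right] at ha ⊢
    exact ha
  · intro a _; simp
  · intro a _; simp
  · intro a _
    rw [mulT_apply]
    simp

lemma tr_C_mul_T (tr : LaurentPolynomial ℂ →ₗ[ℂ] ℂ) (a : ℂ) (j : ℤ) :
    tr (C a * T j) = a * tr (T j) := by
  rw [C_eq_algebraMap, ← Algebra.smul_def, map_smul, smul_eq_mul]

lemma tr_lscale (tr : LaurentPolynomial ℂ →ₗ[ℂ] ℂ) (s : ℂ) (Q : LaurentPolynomial ℂ) :
    tr (lscale s Q) = ∑ j ∈ Q.coeff.support, Q.coeff j * (s ^ j * tr (T j)) := by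
  rw [lscale, map_sum]
  exact Finset.sum_congr rfl fun j _ => by rw [tr_C_mul_T]; ring

lemma tr_T_lscale (tr : LaurentPolynomial ℂ →ₗ[ℂ] ℂ) (l : ℤ) (s : ℂ)
    (Q : LaurentPolynomial ℂ) :
    tr (T l * lscale s Q) = ∑ j ∈ Q.coeff.support, Q.coeff j * (s ^ j * tr (T (l + j))) := by
  rw [lscale, Finset.mul_sum, map_sum]
  refine Finset.sum_congr rfl fun j _ => ?_
  rw [mul_left_comm, ← T_add, tr_C_mul_T]
  ring

/-- let `0 < q < 1`, `l ∈ ℤ`, `P` a nonzero Laurent polynomial, and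
`tr : ℂ[z,z⁻¹] → ℂ` a linear map with `tr(P(qz)R(qz)) = tr(z^l P(q⁻¹z)R(q⁻¹z))`
for all Laurent polynomials `R`. If `w ∈ V` is defined by `wₘ = tr(z^{-m})`,
then `P(z)·w(q⁻¹z) = q^l·(z^l P(z))·w(qz)` holds in `V`. -/
theorem trace_series_functional_equation (q : ℝ) (hq0 : 0 < q) (hq1 : q < 1)
    (l : ℤ) (P : LaurentPolynomial ℂ) (hP : P ≠ 0)
    (tr : LaurentPolynomial ℂ →ₗ[ℂ] ℂ)
    (htr : ∀ R : LaurentPolynomial ℂ,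
      tr (lscale (q : ℂ) (P * R)) = tr (T l * lscale ((q : ℂ)⁻¹) (P * R)))
    (w : ℤ → ℂ) (hw : ∀ m : ℤ, w m = tr (T (-m))) :
    laurentMul P (vscale ((q : ℂ)⁻¹) w)
      = ((q : ℂ) ^ l) • laurentMul (T l * P) (vscale (q : ℂ) w) := by
  have hq : (q : ℂ) ≠ 0 := by
    exact_mod_cast hq0.ne'
  funext m
  show ∑ j ∈ P.coeff.support, P.coeff j * vscale ((q:ℂ)⁻¹) w (m - j)
      = (q:ℂ) ^ l * ∑ j ∈ (T l * P : LaurentPolynomial ℂ).coeff.support,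
          (T l * P : LaurentPolynomial ℂ).coeff j * vscale (q:ℂ) w (m - j)
  have key := htr (T (-m))
  rw [tr_lscale, tr_T_lscale,
      shift_sum P (-m) (fun j => (q:ℂ) ^ j * tr (T j)),
      shift_sum P (-m) (fun j => ((q:ℂ)⁻¹) ^ j * tr (T (l + j)))] at key
  rw [mul_comm (T l) P, shift_sum P l (fun j => vscale (q:ℂ) w (m - j)), Finset.mul_sum]
  have hL : ∑ j ∈ P.coeff.support, P.coeff j * vscale ((q:ℂ)⁻¹) w (m - j)
      = ∑ j ∈ P.coeff.support, P.coeff j * ((q:ℂ) ^ (j + -m) * tr (T (j + -m))) := by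
    refine Finset.sum_congr rfl fun j _ => ?_
    rw [vscale, hw (m - j)]
    have h1 : ((q:ℂ)⁻¹) ^ (m - j) = (q:ℂ) ^ (j + -m) := by
      rw [inv_zpow, ← zpow_neg]
      congr 1
      ring
    have h2 : -(m - j) = j + -m := by ring
    rw [h1, h2]
  have hR : ∑ j ∈ P.coeff.support, (q:ℂ) ^ l * (P.coeff j * vscale (q:ℂ) w (m - (j + l)))
      = ∑ j ∈ P.coeff.support, P.coeff j * (((q:ℂ)⁻¹) ^ (j + -m) * tr (T (l + (j + -m)))) := by
    refine Finset.sum_congr rfl fun j _ => ?_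
    rw [vscale, hw (m - (j + l))]
    have h1 : ((q:ℂ)⁻¹) ^ (j + -m) = (q:ℂ) ^ (m - j) := by
      rw [inv_zpow, ← zpow_neg]
      congr 1
      ring
    have h2 : -(m - (j + l)) = l + (j + -m) := by ring
    have h3 : (q:ℂ) ^ (m - j) = (q:ℂ) ^ l * (q:ℂ) ^ (m - (j + l)) := by
      rw [← zpow_add₀ hq]
      congr 1
      ring
    rw [h1, h2, h3]
    ring
  rw [hL, hR]
  exact key
end

section
/- Let 0 < q < 1, let θ be as defined below, let α_1, …, α_N and β_1, …, β_M be nonzero complex numbers, let c be a nonzero complex number, let m be an integer, and define w(z) = c·∏_{i=1}^N θ(z/α_i) / ∏_{j=1}^M θ(z/β_j). Suppose that w(q^{−1}z) = q^m z^m w(qz) holds for every z ∈ ℂ ∖ {0} at which both sides are defined. Then N = M + m and (−1)^{N−M}·∏_{i=1}^N α_i / ∏_{j=1}^M β_j = q^{−2m}. -/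
open Complex Filter

/-- The rescaled Jacobi theta function
`θ(z) = (1 - z) ∏_{n=1}^∞ (1 - q^{2n} z)(1 - q^{2n} z⁻¹)`. -/
noncomputable def theta (q : ℝ) (z : ℂ) : ℂ :=
  (1 - z) * ∏' n : ℕ,
    ((1 - (q : ℂ) ^ (2 * (n + 1)) * z) * (1 - (q : ℂ) ^ (2 * (n + 1)) * z⁻¹))

noncomputable def gfun (q : ℝ) (x : ℂ) (n : ℕ) : ℂ := 1 - (q:ℂ) ^ (2 * (n + 1)) * x

lemma gfun_norm (q : ℝ) (hq0 : 0 < q) (x : ℂ) (n : ℕ) :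
    ‖(q:ℂ) ^ (2 * (n + 1)) * x‖ = (q^2) ^ (n+1) * ‖x‖ := by
  rw [norm_mul, norm_pow, Complex.norm_real, Real.norm_eq_abs, abs_of_pos hq0, ← pow_mul]

lemma gfun_summable_log {q : ℝ} (hq0 : 0 < q) (hq1 : q < 1) (x : ℂ) :
    Summable fun n : ℕ => Complex.log (gfun q x n) := by
  have hq2 : q^2 < 1 := by nlinarith
  have hq2' : (0:ℝ) ≤ q^2 := sq_nonneg q
  have hg : Summable (fun n : ℕ => (3/2) * ((q^2) ^ (n+1) * ‖x‖)) := by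
    apply Summable.mul_left
    exact ((summable_nat_add_iff 1).2 ((summable_geometric_of_lt_one hq2' hq2).mul_right ‖x‖))
  apply Summable.of_norm_bounded_eventually_nat hg
  have htend : Tendsto (fun n : ℕ => (q^2) ^ (n+1) * ‖x‖) atTop (nhds 0) := by
    have := (tendsto_pow_atTop_nhds_zero_of_lt_one hq2' hq2).comp (tendsto_add_atTop_nat 1)
    simpa using this.mul_const ‖x‖
  filter_upwards [htend.eventually_le_const (by norm_num : (0:ℝ) < 1/2)] with n hn
  have h1 : gfun q x n = 1 + (-((q:ℂ) ^ (2 * (n + 1)) * x)) := by rw [gfun]; ring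
  rw [h1]
  calc ‖Complex.log (1 + (-((q:ℂ) ^ (2 * (n + 1)) * x)))‖
      ≤ 3/2 * ‖(-((q:ℂ) ^ (2 * (n + 1)) * x))‖ := by
        apply Complex.norm_log_one_add_half_le_self
        rw [norm_neg, gfun_norm q hq0]; exact hn
    _ = 3/2 * ((q^2) ^ (n+1) * ‖x‖) := by rw [norm_neg, gfun_norm q hq0]

lemma hasProd_zero_of_eq_zero {f : ℕ → ℂ} (h : ∃ n, f n = 0) : HasProd f 0 := by
  obtain ⟨n, hn⟩ := h
  have : ∀ᶠ s : Finset ℕ in atTop, (∏ i ∈ s, f i) = 0 := by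
    filter_upwards [Filter.eventually_ge_atTop {n}] with s hs
    exact Finset.prod_eq_zero (hs (Finset.mem_singleton_self n)) hn
  exact Tendsto.congr' (this.mono fun s hs => hs.symm) tendsto_const_nhds

lemma gfun_multipliable {q : ℝ} (hq0 : 0 < q) (hq1 : q < 1) (x : ℂ) :
    Multipliable (gfun q x) := by
  by_cases h : ∀ n, gfun q x n ≠ 0
  · exact Complex.multipliable_of_summable_log (gfun_summable_log hq0 hq1 x)
  · push_neg at h
    exact ⟨0, hasProd_zero_of_eq_zero h⟩

lemma gfun_tprod_ne_zero {q : ℝ} (hq0 : 0 < q) (hq1 : q < 1) (x : ℂ)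
    (h : ∀ n, gfun q x n ≠ 0) : (∏' n, gfun q x n) ≠ 0 := by
  have h2 := Complex.cexp_tsum_eq_tprod h (gfun_summable_log hq0 hq1 x)
  rw [← h2]
  exact Complex.exp_ne_zero _

lemma theta_eq {q : ℝ} (hq0 : 0 < q) (hq1 : q < 1) (z : ℂ) :
    theta q z = (1 - z) * ((∏' n, gfun q z n) * (∏' n, gfun q z⁻¹ n)) := by
  rw [theta]
  exact congrArg ((1 - z) * ·) (Multipliable.tprod_mul (gfun_multipliable hq0 hq1 z) (gfun_multipliable hq0 hq1 z⁻¹))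

lemma gfun_shift (q : ℝ) (x : ℂ) : (fun n => gfun q x (n + 1)) = gfun q ((q:ℂ)^2 * x) := by
  funext n
  simp only [gfun]
  rw [show 2 * (n + 1 + 1) = 2 * (n + 1) + 2 by ring, pow_add]
  ring

lemma Fshift {q : ℝ} (hq0 : 0 < q) (hq1 : q < 1) (x : ℂ) :
    (∏' n, gfun q x n) = (1 - (q:ℂ)^2 * x) * ∏' n, gfun q ((q:ℂ)^2 * x) n := by
  have h := gfun_shift q x
  rw [tprod_eq_zero_mul' (by rw [h]; exact gfun_multipliable hq0 hq1 _), h]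
  congr 1

lemma theta_funeq {q : ℝ} (hq0 : 0 < q) (hq1 : q < 1) {u : ℂ} (hu : u ≠ 0) :
    theta q (((q:ℂ)^2)⁻¹ * u) = -((q:ℂ)^2)⁻¹ * u * theta q u := by
  have hQ : ((q:ℂ)^2) ≠ 0 := pow_ne_zero _ (Complex.ofReal_ne_zero.2 hq0.ne')
  have e1 : (((q:ℂ)^2)⁻¹ * u)⁻¹ = (q:ℂ)^2 * u⁻¹ := by rw [mul_inv, inv_inv]
  have e2 : ((q:ℂ)^2) * (((q:ℂ)^2)⁻¹ * u) = u := by rw [← mul_assoc, mul_inv_cancel₀ hQ, one_mul]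
  rw [theta_eq hq0 hq1, theta_eq hq0 hq1, e1,
      Fshift hq0 hq1 (((q:ℂ)^2)⁻¹ * u), e2, Fshift hq0 hq1 u⁻¹]
  field_simp [Complex.ofReal_ne_zero.2 hq0.ne']
  ring

lemma theta_ne_zero {q : ℝ} (hq0 : 0 < q) (hq1 : q < 1) {x : ℂ} (hx0 : x ≠ 0)
    (h : ∀ k : ℤ, x ≠ (q:ℂ) ^ (2 * k)) : theta q x ≠ 0 := by
  have hQ : (q:ℂ) ≠ 0 := Complex.ofReal_ne_zero.2 hq0.ne'
  rw [theta_eq hq0 hq1]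
  have h1 : (1 : ℂ) - x ≠ 0 := by
    rw [sub_ne_zero]
    intro hx1
    exact h 0 (by simpa using hx1.symm)
  have h2 : ∀ n, gfun q x n ≠ 0 := by
    intro n
    rw [gfun, sub_ne_zero]
    intro heq
    apply h (-(n+1))
    have hpow : (q:ℂ) ^ (2*(n+1)) ≠ 0 := pow_ne_zero _ hQ
    have hx : x = ((q:ℂ) ^ (2*(n+1)))⁻¹ := by
      field_simp at heq ⊢
      linear_combination -heq
    rw [hx]
    rw [show (2 * (-((n:ℤ)+1))) = -(2*(n+1) : ℕ) by push_cast; ring, zpow_neg, zpow_natCast]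
  have h3 : ∀ n, gfun q x⁻¹ n ≠ 0 := by
    intro n
    rw [gfun, sub_ne_zero]
    intro heq
    apply h ((n:ℤ)+1)
    have hx : x = (q:ℂ) ^ (2*(n+1)) := by
      field_simp at heq
      linear_combination heq
    rw [hx, show (2 * ((n:ℤ)+1)) = ((2*(n+1) : ℕ) : ℤ) by push_cast; ring, zpow_natCast]
  exact mul_ne_zero h1 (mul_ne_zero (gfun_tprod_ne_zero hq0 hq1 x h2)
    (gfun_tprod_ne_zero hq0 hq1 x⁻¹ h3))

lemma theta_funeq' {q : ℝ} (hq0 : 0 < q) (hq1 : q < 1) {z γ : ℂ} (hz : z ≠ 0) (hγ : γ ≠ 0) :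
    theta q ((q:ℂ)⁻¹ * z / γ) = -((q:ℂ)⁻¹ * z) / γ * theta q ((q:ℂ) * z / γ) := by
  have hQ : (q:ℂ) ≠ 0 := Complex.ofReal_ne_zero.2 hq0.ne'
  have hu : (q:ℂ) * z / γ ≠ 0 := by
    apply div_ne_zero (mul_ne_zero hQ hz) hγ
  have e : (q:ℂ)⁻¹ * z / γ = ((q:ℂ)^2)⁻¹ * ((q:ℂ) * z / γ) := by
    field_simp
  rw [e, theta_funeq hq0 hq1 hu]
  field_simp

/-- let `0 < q < 1`, let `α_1, …, α_N`, `β_1, …, β_M` be nonzero,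
`c ≠ 0`, `m ∈ ℤ`, and `w(z) = c ∏ᵢ θ(z/αᵢ) / ∏ⱼ θ(z/βⱼ)`. If
`w(q⁻¹z) = q^m z^m w(qz)` holds at every `z ≠ 0` where both sides are defined
(i.e. where the denominators do not vanish), then `N = M + m` and
`(-1)^{N-M} ∏ᵢ αᵢ / ∏ⱼ βⱼ = q^{-2m}`. -/
theorem theta_quotient_functional_equation_constraints (q : ℝ)
    (hq0 : 0 < q) (hq1 : q < 1)
    (N M : ℕ) (α : Fin N → ℂ) (β : Fin M → ℂ)
    (hα : ∀ i, α i ≠ 0) (hβ : ∀ j, β j ≠ 0)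
    (c : ℂ) (hc : c ≠ 0) (m : ℤ)
    (w : ℂ → ℂ)
    (hw : ∀ z : ℂ, w z =
      c * (∏ i, theta q (z / α i)) / ∏ j, theta q (z / β j))
    (heq : ∀ z : ℂ, z ≠ 0 →
      (∀ j, theta q ((q : ℂ)⁻¹ * z / β j) ≠ 0) →
      (∀ j, theta q ((q : ℂ) * z / β j) ≠ 0) →
      w ((q : ℂ)⁻¹ * z) = (q : ℂ) ^ m * z ^ m * w ((q : ℂ) * z)) :
    (N : ℤ) = (M : ℤ) + m ∧
    (-1 : ℂ) ^ ((N : ℤ) - (M : ℤ)) * ((∏ i, α i) / ∏ j, β j)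
      = (q : ℂ) ^ (-2 * m) := by
  classical
  have hQ : (q:ℂ) ≠ 0 := Complex.ofReal_ne_zero.2 hq0.ne'
  set Aprod := ∏ i, α i with hAprod
  set Bprod := ∏ j, β j with hBprod
  have hAne : Aprod ≠ 0 := Finset.prod_ne_zero_iff.2 fun i _ => hα i
  have hBne : Bprod ≠ 0 := Finset.prod_ne_zero_iff.2 fun j _ => hβ j
  -- the set of "bad" real points
  set Bad : Set ℂ := (⋃ (i : Fin N), ⋃ (k : ℤ), {α i * (q:ℂ)^(2*k) / (q:ℂ)}) ∪
      (⋃ (j : Fin M), ⋃ (k : ℤ), {β j * (q:ℂ)^(2*k) / (q:ℂ)}) with hBadDef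
  have hBadc : Bad.Countable :=
    Set.Countable.union
      (Set.countable_iUnion fun i => Set.countable_iUnion fun k => Set.countable_singleton _)
      (Set.countable_iUnion fun j => Set.countable_iUnion fun k => Set.countable_singleton _)
  -- the key algebraic identity at good points
  have claim : ∀ t : ℝ, 0 < t → (t:ℂ) ∉ Bad →
      (-((q:ℂ)⁻¹ * (t:ℂ)))^N * Bprod
        = (q:ℂ)^m * (t:ℂ)^m * (-((q:ℂ)⁻¹ * (t:ℂ)))^M * Aprod := by
    intro t ht hBt
    have hz : (t:ℂ) ≠ 0 := Complex.ofReal_ne_zero.2 ht.ne'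
    have hθ : ∀ (γ:ℂ), γ ≠ 0 → (∀ k : ℤ, (t:ℂ) ≠ γ * (q:ℂ)^(2*k) / (q:ℂ)) →
        theta q ((q:ℂ)*t/γ) ≠ 0 := by
      intro γ hγ hne
      apply theta_ne_zero hq0 hq1 (div_ne_zero (mul_ne_zero hQ hz) hγ)
      intro k heq'
      apply hne k
      field_simp at heq' ⊢
      linear_combination heq'
    have hA : ∀ (i : Fin N) (k:ℤ), (t:ℂ) ≠ α i * (q:ℂ)^(2*k) / (q:ℂ) := by
      intro i k h
      exact hBt (Set.mem_union_left _ (Set.mem_iUnion.2 ⟨i, Set.mem_iUnion.2 ⟨k, by simpa using h⟩⟩))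
    have hB' : ∀ (j : Fin M) (k:ℤ), (t:ℂ) ≠ β j * (q:ℂ)^(2*k) / (q:ℂ) := by
      intro j k h
      exact hBt (Set.mem_union_right _ (Set.mem_iUnion.2 ⟨j, Set.mem_iUnion.2 ⟨k, by simpa using h⟩⟩))
    have hθα : ∀ i, theta q ((q:ℂ)*t/α i) ≠ 0 := fun i => hθ _ (hα i) (hA i)
    have hθβ : ∀ j, theta q ((q:ℂ)*t/β j) ≠ 0 := fun j => hθ _ (hβ j) (hB' j)
    have hθβ' : ∀ j, theta q ((q:ℂ)⁻¹*t/β j) ≠ 0 := by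
      intro j
      rw [theta_funeq' hq0 hq1 hz (hβ j)]
      exact mul_ne_zero (div_ne_zero (neg_ne_zero.2 (mul_ne_zero (inv_ne_zero hQ) hz)) (hβ j))
        (hθβ j)
    have happ := heq t hz hθβ' hθβ
    rw [hw, hw] at happ
    have hprodα : (∏ i, theta q ((q:ℂ)⁻¹*(t:ℂ)/α i))
        = ((-((q:ℂ)⁻¹*(t:ℂ)))^N / Aprod) * ∏ i, theta q ((q:ℂ)*(t:ℂ)/α i) := by
      rw [Finset.prod_congr rfl (fun i _ => theta_funeq' hq0 hq1 hz (hα i)),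
        Finset.prod_mul_distrib, Finset.prod_div_distrib, Finset.prod_const,
        Finset.card_univ, Fintype.card_fin]
    have hprodβ : (∏ j, theta q ((q:ℂ)⁻¹*(t:ℂ)/β j))
        = ((-((q:ℂ)⁻¹*(t:ℂ)))^M / Bprod) * ∏ j, theta q ((q:ℂ)*(t:ℂ)/β j) := by
      rw [Finset.prod_congr rfl (fun j _ => theta_funeq' hq0 hq1 hz (hβ j)),
        Finset.prod_mul_distrib, Finset.prod_div_distrib, Finset.prod_const,
        Finset.card_univ, Fintype.card_fin]
    rw [hprodα, hprodβ] at happ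
    set Pa := ∏ i, theta q ((q:ℂ)*(t:ℂ)/α i) with hPa
    set Pb := ∏ j, theta q ((q:ℂ)*(t:ℂ)/β j) with hPb
    have hPane : Pa ≠ 0 := Finset.prod_ne_zero_iff.2 fun i _ => hθα i
    have hPbne : Pb ≠ 0 := Finset.prod_ne_zero_iff.2 fun j _ => hθβ j
    set X := -((q:ℂ)⁻¹ * (t:ℂ)) with hX
    have hXne : X ≠ 0 := neg_ne_zero.2 (mul_ne_zero (inv_ne_zero hQ) hz)
    set P := (q:ℂ)^m with hP
    set T := (t:ℂ)^m with hT
    -- happ : c * (X^N/Aprod * Pa) / (X^M/Bprod * Pb) = P * T * (c * Pa / Pb)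
    apply mul_left_cancel₀ (mul_ne_zero (mul_ne_zero hc hPane) hPbne)
    field_simp at happ
    linear_combination c * Pa * Pb * happ
  -- pick two good points
  have pick : ∀ (S : Set ℝ), S.Countable → ∃ t : ℝ, 0 < t ∧ (t:ℂ) ∉ Bad ∧ t ∉ S := by
    intro S hS
    have hc2 : (Complex.ofReal ⁻¹' Bad ∪ S).Countable :=
      (hBadc.preimage Complex.ofReal_injective).union hS
    have hne : (Set.Ioi (0:ℝ) \ (Complex.ofReal ⁻¹' Bad ∪ S)).Nonempty := by
      apply MeasureTheory.nonempty_of_measure_ne_zero (μ := MeasureTheory.volume)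
      rw [MeasureTheory.measure_diff_null (hc2.measure_zero _)]
      simp [Real.volume_Ioi]
    obtain ⟨t, htI, htS⟩ := hne
    exact ⟨t, htI, fun h => htS (Or.inl h), fun h => htS (Or.inr h)⟩
  obtain ⟨t1, ht1, hB1, -⟩ := pick ∅ Set.countable_empty
  obtain ⟨t2, ht2, hB2, ht21⟩ := pick {t1} (Set.countable_singleton t1)
  have hne12 : t2 ≠ t1 := by simpa using ht21
  have eq1 := claim t1 ht1 hB1
  have eq2 := claim t2 ht2 hB2
  -- take norms
  set a := ‖Aprod‖ with ha
  set b := ‖Bprod‖ with hb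
  have ha0 : 0 < a := norm_pos_iff.2 hAne
  have hb0 : 0 < b := norm_pos_iff.2 hBne
  have hnorm : ∀ t : ℝ, 0 < t →
      ((-((q:ℂ)⁻¹ * (t:ℂ)))^N * Bprod = (q:ℂ)^m * (t:ℂ)^m * (-((q:ℂ)⁻¹ * (t:ℂ)))^M * Aprod) →
      (q⁻¹ * t)^N * b = q^m * t^m * (q⁻¹*t)^M * a := by
    intro t ht hE
    have h := congrArg (fun x : ℂ => ‖x‖) hE
    simpa [norm_mul, norm_pow, norm_zpow, norm_neg, norm_inv, Complex.norm_real,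
      Real.norm_eq_abs, abs_of_pos hq0, abs_of_pos ht, mul_comm, mul_assoc, mul_left_comm]
      using h
  -- take logs
  have hlog : ∀ t : ℝ, 0 < t →
      ((q⁻¹ * t)^N * b = q^m * t^m * (q⁻¹*t)^M * a) →
      (N:ℝ) * (Real.log t - Real.log q) + Real.log b
        = m * Real.log q + m * Real.log t + M * (Real.log t - Real.log q) + Real.log a := by
    intro t ht hE
    have e0 : Real.log (q⁻¹ * t) = Real.log t - Real.log q := by
      rw [Real.log_mul (inv_ne_zero hq0.ne') ht.ne', Real.log_inv]; ring
    have e1 : Real.log ((q⁻¹ * t) ^ N) = N * (Real.log t - Real.log q) := by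
      rw [Real.log_pow, e0]
    have e2 : Real.log ((q⁻¹ * t) ^ M) = M * (Real.log t - Real.log q) := by
      rw [Real.log_pow, e0]
    have h := congrArg Real.log hE
    rw [Real.log_mul (by positivity) hb0.ne', e1,
        Real.log_mul (by positivity) ha0.ne',
        Real.log_mul (by positivity) (by positivity), e2,
        Real.log_mul (by positivity) (by positivity),
        Real.log_zpow, Real.log_zpow] at h
    linear_combination h
  have L1 := hlog t1 ht1 (hnorm t1 ht1 eq1)
  have L2 := hlog t2 ht2 (hnorm t2 ht2 eq2)
  have hltne : Real.log t2 - Real.log t1 ≠ 0 := by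
    rw [sub_ne_zero]
    exact fun h => hne12 (Real.log_injOn_pos (Set.mem_Ioi.2 ht2) (Set.mem_Ioi.2 ht1) h)
  have hkey : ((N:ℝ) - M - m) * (Real.log t2 - Real.log t1) = 0 := by
    linear_combination L2 - L1
  have hNM : (N:ℤ) = (M:ℤ) + m := by
    rcases mul_eq_zero.1 hkey with h | h
    · have h2 : (N:ℝ) = (M:ℝ) + (m:ℝ) := by linarith
      exact_mod_cast h2
    · exact absurd h hltne
  refine ⟨hNM, ?_⟩
  have hz1 : (t1:ℂ) ≠ 0 := Complex.ofReal_ne_zero.2 ht1.ne'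
  set X := -((q:ℂ)⁻¹ * (t1:ℂ)) with hXdef
  have hXne : X ≠ 0 := neg_ne_zero.2 (mul_ne_zero (inv_ne_zero hQ) hz1)
  have hQm : (q:ℂ)^m ≠ 0 := zpow_ne_zero _ hQ
  have hXNsplit : X ^ N = X ^ M * X ^ m := by
    calc X ^ N = X ^ ((N:ℤ)) := (zpow_natCast X N).symm
    _ = X ^ ((M:ℤ) + m) := by rw [hNM]
    _ = X ^ ((M:ℤ)) * X ^ m := zpow_add₀ hXne _ _
    _ = X ^ M * X ^ m := by rw [zpow_natCast]
  rw [hXNsplit] at eq1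
  have h7 : X ^ m * Bprod = (q:ℂ)^m * (t1:ℂ)^m * Aprod := by
    apply mul_left_cancel₀ (pow_ne_zero M hXne)
    linear_combination eq1
  have hXm : X ^ m = (-1:ℂ)^m * ((q:ℂ)^m)⁻¹ * (t1:ℂ)^m := by
    rw [hXdef, show -((q:ℂ)⁻¹ * (t1:ℂ)) = (-1) * (q:ℂ)⁻¹ * (t1:ℂ) by ring,
      mul_zpow, mul_zpow, inv_zpow]
  have hzm : (t1:ℂ) ^ m ≠ 0 := zpow_ne_zero _ hz1
  have h9 : (-1:ℂ)^m * ((q:ℂ)^m)⁻¹ * Bprod = (q:ℂ)^m * Aprod := by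
    apply mul_left_cancel₀ hzm
    linear_combination h7 - Bprod * hXm
  have hm1 : ((-1:ℂ))^m * ((-1:ℂ))^m = 1 := by
    rw [← zpow_add₀ (by norm_num : (-1:ℂ) ≠ 0), show m + m = 2*m by ring, zpow_mul]
    norm_num
  have hq2m : (q:ℂ)^(-2*m) = ((q:ℂ)^m)⁻¹ * ((q:ℂ)^m)⁻¹ := by
    rw [← mul_inv, ← zpow_add₀ hQ, ← zpow_neg]
    congr 1
    ring
  rw [show (N:ℤ) - (M:ℤ) = m by omega, hq2m]
  field_simp [hQm] at h9 ⊢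
  linear_combination (-(-1:ℂ)^m) * h9 + Bprod * hm1
end
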